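/- arXiv:math/0602537 — 2 statements merged into one kernel-verified Lean document; each statement's English description precedes it below -/
import Mathlib

section
/- Let R be a regular local ring containing a field, let I ⊆ R be an ideal of height h, and let A = R/I. Let Γ_1, Γ_2, …, Γ_t be the connected components of the graph Γ_A, and for each i let I_i ⊆ R be the intersection of those minimal primes of I of height h whose images in A are the vertices of Γ_i. Then for all i ≠ j, every prime of R containing I_i + I_j has height at least h + 2; in particular height(I_i + I_j) ≥ h + 2. -/
set_option maxHeartbeats 1000000

open IsLocalRing

noncomputable section

def idealHeight {R : Type*} [CommRing R] (I : Ideal R) : ℕ∞ :=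
  ⨅ (P : PrimeSpectrum R) (_ : I ≤ P.asIdeal), Order.height P

def ContainsField (R : Type*) [CommRing R] : Prop := ∃ K : Subring R, IsField K

def IsRegularLocal (R : Type*) [CommRing R] [IsLocalRing R] : Prop :=
  IsNoetherianRing R ∧ ∃ s : Finset R,
    Ideal.span (s : Set R) = maximalIdeal R ∧ (s.card : WithBot ℕ∞) = ringKrullDim R

def TopMinimalPrimes (B : Type*) [CommRing B] : Type _ :=
  {P : Ideal B // P ∈ minimalPrimes B ∧ ringKrullDim (B ⧸ P) = ringKrullDim B}

def HHGraph (B : Type*) [CommRing B] : SimpleGraph (TopMinimalPrimes B) where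
  Adj P Q := P ≠ Q ∧ idealHeight (P.1 ⊔ Q.1) = 1
  symm := ⟨fun P Q h => ⟨h.1.symm, by rw [sup_comm]; exact h.2⟩⟩
  loopless := ⟨fun P h => h.1 rfl⟩

def componentIdeal {R : Type*} [CommRing R] (I : Ideal R)
    (c : (HHGraph (R ⧸ I)).ConnectedComponent) : Ideal R :=
  ⨅ (P : TopMinimalPrimes (R ⧸ I))
    (_ : (HHGraph (R ⧸ I)).connectedComponentMk P = c),
      Ideal.comap (Ideal.Quotient.mk I) P.1

/-- A prime containing a finite infimum (with a propositional condition) contains one member. -/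
lemma exists_le_of_iInf_le {R ι : Type*} [CommRing R] [Finite ι] (f : ι → Ideal R)
    (cond : ι → Prop) (P : Ideal R) (hP : P.IsPrime)
    (hle : (⨅ (i : ι) (_ : cond i), f i) ≤ P) :
    ∃ i, cond i ∧ f i ≤ P := by
  classical
  haveI := Fintype.ofFinite ι
  have h1 : (Finset.univ.filter cond).inf f ≤ P := by
    refine le_trans ?_ hle
    refine le_iInf fun i => le_iInf fun hi => ?_
    exact Finset.inf_le (Finset.mem_filter.mpr ⟨Finset.mem_univ _, hi⟩)
  obtain ⟨i, hi, hfi⟩ := (Ideal.IsPrime.inf_le' hP).mp h1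
  exact ⟨i, (Finset.mem_filter.mp hi).2, hfi⟩

lemma finite_topMinimalPrimes (B : Type*) [CommRing B] [IsNoetherianRing B] :
    Finite (TopMinimalPrimes B) := by
  exact Set.Finite.to_subtype
    (s := {P : Ideal B | P ∈ minimalPrimes B ∧ ringKrullDim (B ⧸ P) = ringKrullDim B})
    ((minimalPrimes.finite_of_isNoetherianRing B).subset fun P hP => hP.1)

theorem statement2 (R : Type) [CommRing R] [IsLocalRing R]
    (hreg : IsRegularLocal R) (hfield : ContainsField R)
    (I : Ideal R) (h : ℕ) (hht : idealHeight I = (h : ℕ∞))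
    (c c' : (HHGraph (R ⧸ I)).ConnectedComponent) (hne : c ≠ c') :
    (∀ P : PrimeSpectrum R, componentIdeal I c ⊔ componentIdeal I c' ≤ P.asIdeal →
        ((h : ℕ∞) + 2) ≤ Order.height P) ∧
      ((h : ℕ∞) + 2) ≤ idealHeight (componentIdeal I c ⊔ componentIdeal I c') := by
  haveI hNR : IsNoetherianRing R := hreg.1
  haveI hNA : IsNoetherianRing (R ⧸ I) := inferInstance
  haveI : Finite (TopMinimalPrimes (R ⧸ I)) := finite_topMinimalPrimes _
  set f := Ideal.Quotient.mk I with hf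
  have hfsurj : Function.Surjective f := Ideal.Quotient.mk_surjective
  -- I is contained in every comap
  have hIle : ∀ J : Ideal (R ⧸ I), I ≤ Ideal.comap f J := by
    intro J x hx
    show f x ∈ J
    rw [show f x = 0 from Ideal.Quotient.eq_zero_iff_mem.mpr hx]
    exact J.zero_mem
  have hhtI : (⨅ (P : PrimeSpectrum R) (_ : I ≤ P.asIdeal), Order.height P) = (h : ℕ∞) := hht
  -- Every prime containing I has height at least h
  have hmin : ∀ q : PrimeSpectrum R, I ≤ q.asIdeal → (h : ℕ∞) ≤ Order.height q := by
    intro q hq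
    exact hhtI ▸ iInf₂_le q hq
  -- The comap map on prime spectra is strictly monotone
  have hcomapmono : StrictMono (PrimeSpectrum.comap f) := by
    have hmono : Monotone (PrimeSpectrum.comap f) := fun a b hab => Ideal.comap_mono hab
    have hinj := PrimeSpectrum.comap_injective_of_surjective f hfsurj
    exact hmono.strictMono_of_injective hinj
  have main : ∀ P : PrimeSpectrum R, componentIdeal I c ⊔ componentIdeal I c' ≤ P.asIdeal →
      ((h : ℕ∞) + 2) ≤ Order.height P := by
    intro P hP
    by_contra hcon
    -- extract vertices
    obtain ⟨V₁, hV₁c, hV₁le⟩ := exists_le_of_iInf_le _ _ P.asIdeal P.isPrime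
      (le_trans le_sup_left hP)
    obtain ⟨V₂, hV₂c, hV₂le⟩ := exists_le_of_iInf_le _ _ P.asIdeal P.isPrime
      (le_trans le_sup_right hP)
    have hVne : V₁ ≠ V₂ := by
      rintro rfl; exact hne (hV₁c ▸ hV₂c.symm ▸ rfl)
    have hIP : I ≤ P.asIdeal := le_trans (hIle V₁.1) hV₁le
    have hkerP : RingHom.ker f ≤ P.asIdeal := by
      rw [show RingHom.ker f = I from Ideal.mk_ker]; exact hIP
    -- the image prime in R ⧸ I
    have hpA : (P.asIdeal.map f).IsPrime := Ideal.map_isPrime_of_surjective hfsurj hkerP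
    set pA : PrimeSpectrum (R ⧸ I) := ⟨P.asIdeal.map f, hpA⟩ with hpAdef
    have hcbot : Ideal.comap f ⊥ ≤ P.asIdeal := by
      intro x hx
      exact hIP (Ideal.Quotient.eq_zero_iff_mem.mp (by simpa using hx))
    have hcomap_pA : PrimeSpectrum.comap f pA = P := by
      apply PrimeSpectrum.ext
      show Ideal.comap f (Ideal.map f P.asIdeal) = P.asIdeal
      rw [Ideal.comap_map_of_surjective f hfsurj, sup_eq_left.mpr hcbot]
    have hV₁pA : V₁.1 ≤ pA.asIdeal := by
      have := Ideal.map_mono (f := f) hV₁le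
      rwa [Ideal.map_comap_of_surjective f hfsurj] at this
    have hV₂pA : V₂.1 ≤ pA.asIdeal := by
      have := Ideal.map_mono (f := f) hV₂le
      rwa [Ideal.map_comap_of_surjective f hfsurj] at this
    -- key height bound: Order.height pA ≤ 1
    have hpA1 : Order.height pA ≤ 1 := by
      by_contra h2
      have h2' : (2 : ℕ∞) ≤ Order.height pA := by
        rw [not_le] at h2
        calc (2 : ℕ∞) = 1 + 1 := by norm_num
          _ ≤ Order.height pA := (ENat.add_one_le_iff (by simp)).mpr h2
      obtain ⟨q, hqlast, hqlen⟩ := Order.exists_series_of_le_height pA (n := 2) h2'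
      -- map the series to Spec R
      set q' := q.map (PrimeSpectrum.comap f) hcomapmono with hq'
      have hq'last : q'.last = P := by
        rw [hq', LTSeries.last_map, hqlast, hcomap_pA]
      have hq'head : I ≤ q'.head.asIdeal := by
        rw [hq', LTSeries.head_map]
        exact hIle _
      obtain ⟨s, hslast, hslen⟩ := Order.exists_series_of_le_height q'.head (n := h)
        (hmin _ hq'head)
      have hconn : s.last = q'.head := hslast
      have hle2 := Order.length_le_height_last (p := s.smash q' hconn)
      rw [RelSeries.last_smash, hq'last] at hle2
      have hlen : (s.smash q' hconn).length = h + 2 := by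
        show s.length + q'.length = h + 2
        have hql : q'.length = q.length := rfl
        omega
      rw [hlen] at hle2
      exact hcon (by exact_mod_cast hle2)
    -- V₁ and V₂ are adjacent
    have hadj : (HHGraph (R ⧸ I)).Adj V₁ V₂ := by
      refine ⟨hVne, ?_⟩
      show (⨅ (z : PrimeSpectrum (R ⧸ I)) (_ : V₁.1 ⊔ V₂.1 ≤ z.asIdeal), Order.height z) = 1
      have hsup : V₁.1 ⊔ V₂.1 ≤ pA.asIdeal := sup_le hV₁pA hV₂pA
      refine le_antisymm (le_trans (iInf_le_of_le pA (iInf_le_of_le hsup le_rfl)) hpA1) ?_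
      refine le_iInf fun z => le_iInf fun hz => ?_
      -- V₁ < z since V₂ ≤ z and V₁ ≠ V₂ with both minimal
      have hV₁z : V₁.1 ≤ z.asIdeal := le_trans le_sup_left hz
      have hV₂z : V₂.1 ≤ z.asIdeal := le_trans le_sup_right hz
      have hV₁z' : (⟨V₁.1, V₁.2.1.1.1⟩ : PrimeSpectrum (R ⧸ I)) < z := by
        refine lt_of_le_of_ne hV₁z ?_
        intro heq
        apply hVne
        have hzV : z.asIdeal = V₁.1 := by rw [← heq]
        have h21 : V₂.1 ≤ V₁.1 := hzV ▸ hV₂z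
        have h12 : V₁.1 ≤ V₂.1 := V₁.2.1.2 ⟨V₂.2.1.1.1, bot_le⟩ h21
        exact Subtype.ext (le_antisymm h12 h21)
      have hle1 := Order.length_le_height_last
        (p := (RelSeries.singleton _ (⟨V₁.1, V₁.2.1.1.1⟩ : PrimeSpectrum (R ⧸ I))).snoc z
          (by simpa using hV₁z'))
      simpa using hle1
    exact hne (by
      rw [← hV₁c, ← hV₂c]
      exact SimpleGraph.ConnectedComponent.sound hadj.reachable)
  refine ⟨main, ?_⟩
  show ((h : ℕ∞) + 2) ≤ ⨅ (P : PrimeSpectrum R)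
    (_ : componentIdeal I c ⊔ componentIdeal I c' ≤ P.asIdeal), Order.height P
  exact le_iInf fun P => le_iInf fun hP => main P hP

end
end

section
/- Let R → T be a flat local homomorphism of regular local rings containing fields such that mT is the maximal ideal of T, where m is the maximal ideal of R, and dim T = dim R = n. Let E be the injective hull of the residue field of R in the category of R-modules and let E_T be the injective hull of the residue field of T in the category of T-modules. Then T ⊗_R E ≅ E_T as T-modules. -/
/-!
STATEMENT 5: Let `R → T` be a flat local homomorphism of regular local rings containing
fields such that `mT` is the maximal ideal of `T` (`m` the maximal ideal of `R`) and
`dim T = dim R = n`.  Let `E` be the injective hull of the residue field of `R` (as an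
`R`-module) and `E_T` the injective hull of the residue field of `T` (as a `T`-module).
Then `T ⊗_R E ≅ E_T` as `T`-modules.
-/

open IsLocalRing TensorProduct

noncomputable section

/-- `E`, together with the embedding `ι` of the residue field, is an injective hull of the
residue field of `R`: `E` is an injective module and the image of `ι` is an essential
submodule of `E`. -/
def IsInjectiveHullOfResidueField (R : Type*) [CommRing R] [IsLocalRing R]
    (E : Type*) [AddCommGroup E] [Module R E] (ι : ResidueField R →ₗ[R] E) : Prop :=
  Module.Injective R E ∧ Function.Injective ι ∧
    ∀ N : Submodule R E, N ≠ ⊥ → LinearMap.range ι ⊓ N ≠ ⊥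

section Aux

variable {R : Type} [CommRing R] [IsLocalRing R]

lemma aux_residue_smul (r : R) (hr : r ∈ maximalIdeal R) (w : ResidueField R) :
    r • w = 0 := by
  obtain ⟨s, rfl⟩ := Ideal.Quotient.mk_surjective w
  have h : r • (Ideal.Quotient.mk (maximalIdeal R) s) =
      Ideal.Quotient.mk (maximalIdeal R) (r * s) := rfl
  refine h.trans ?_
  erw [Ideal.Quotient.eq_zero_iff_mem]
  exact Ideal.mul_mem_right _ _ hr

variable {E : Type} [AddCommGroup E] [Module R E]
variable (ι : ResidueField R →ₗ[R] E)

/-- Socle lemma: any element of an essential extension of the residue field killed by the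
maximal ideal lies in the image of the residue field. -/
lemma aux_socle (hess : ∀ N : Submodule R E, N ≠ ⊥ → LinearMap.range ι ⊓ N ≠ ⊥)
    (v : E) (hv : ∀ r ∈ maximalIdeal R, r • v = 0) : v ∈ LinearMap.range ι := by
  by_cases h0 : v = 0
  · rw [h0]; exact Submodule.zero_mem _
  have hN : (R ∙ v) ≠ ⊥ := by
    simpa [Submodule.span_singleton_eq_bot] using h0
  obtain ⟨w, hw, hwne⟩ := (Submodule.ne_bot_iff _).mp (hess _ hN)
  obtain ⟨hw1, hw2⟩ := Submodule.mem_inf.mp hw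
  obtain ⟨s, hs⟩ := Submodule.mem_span_singleton.mp hw2
  have hsm : s ∉ maximalIdeal R := by
    intro hmem
    exact hwne (by rw [← hs, hv s hmem])
  have hu : IsUnit s := by
    by_contra hns
    exact hsm ((IsLocalRing.mem_maximalIdeal s).mpr hns)
  obtain ⟨u, rfl⟩ := hu
  have : ((u⁻¹ : Rˣ) : R) • ((u : R) • v) = v := by
    rw [← mul_smul, Units.inv_mul, one_smul]
  rw [← this]
  apply Submodule.smul_mem
  rw [hs]
  exact hw1

/-- Torsion lemma: every element of an essential extension of the residue field over a
Noetherian local ring is killed by a power of the maximal ideal. -/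
lemma aux_torsion [IsNoetherianRing R]
    (hess : ∀ N : Submodule R E, N ≠ ⊥ → LinearMap.range ι ⊓ N ≠ ⊥)
    (e : E) : ∃ t : ℕ, ∀ r ∈ (maximalIdeal R) ^ t, r • e = 0 := by
  haveI : IsNoetherian R R := by rwa [← isNoetherianRing_iff]
  -- Step 1: every element of the maximal ideal acts nilpotently on e
  have step1 : ∀ x ∈ maximalIdeal R, ∃ N : ℕ, x ^ N • e = 0 := by
    intro x hx
    have hmono : Monotone (fun n : ℕ =>
        LinearMap.ker (LinearMap.toSpanSingleton R E (x ^ n • e))) := by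
      apply monotone_nat_of_le_succ
      intro n r hr
      rw [LinearMap.mem_ker, LinearMap.toSpanSingleton_apply] at hr ⊢
      have hps : x ^ (n + 1) • e = x • (x ^ n • e) := by
        rw [← mul_smul, ← pow_succ']
      rw [hps, smul_comm, hr, smul_zero]
    obtain ⟨n₀, hn₀⟩ := monotone_stabilizes_iff_noetherian.mpr ‹IsNoetherian R R›
      ⟨fun n => LinearMap.ker (LinearMap.toSpanSingleton R E (x ^ n • e)), hmono⟩
    by_cases hz : x ^ n₀ • e = 0
    · exact ⟨n₀, hz⟩
    exfalso
    have hNbot : (R ∙ (x ^ n₀ • e)) ≠ ⊥ := by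
      simpa [Submodule.span_singleton_eq_bot] using hz
    obtain ⟨w, hw, hwne⟩ := (Submodule.ne_bot_iff _).mp (hess _ hNbot)
    obtain ⟨hw1, hw2⟩ := Submodule.mem_inf.mp hw
    obtain ⟨c, hc⟩ := hw1
    obtain ⟨s, hsval⟩ := Submodule.mem_span_singleton.mp hw2
    have hxw : x • w = 0 := by
      rw [← hc, ← LinearMap.map_smul, aux_residue_smul x hx c, LinearMap.map_zero]
    have hs1 : s ∈ LinearMap.ker (LinearMap.toSpanSingleton R E (x ^ (n₀ + 1) • e)) := by
      rw [LinearMap.mem_ker, LinearMap.toSpanSingleton_apply]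
      have hps : x ^ (n₀ + 1) • e = x • (x ^ n₀ • e) := by
        rw [← mul_smul, ← pow_succ']
      rw [hps, smul_comm, hsval, hxw]
    have hs0 : s ∈ LinearMap.ker (LinearMap.toSpanSingleton R E (x ^ n₀ • e)) := by
      have heq : LinearMap.ker (LinearMap.toSpanSingleton R E (x ^ n₀ • e)) =
          LinearMap.ker (LinearMap.toSpanSingleton R E (x ^ (n₀ + 1) • e)) :=
        hn₀ (n₀ + 1) (Nat.le_succ n₀)
      rw [heq]
      exact hs1
    rw [LinearMap.mem_ker, LinearMap.toSpanSingleton_apply] at hs0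
    rw [hsval] at hs0
    exact hwne hs0
  -- Step 2: the maximal ideal is contained in the radical of the annihilator of e
  have hrad : maximalIdeal R ≤ Ideal.radical (LinearMap.ker (LinearMap.toSpanSingleton R E e)) := by
    intro x hx
    obtain ⟨N, hN⟩ := step1 x hx
    exact ⟨N, by rwa [LinearMap.mem_ker, LinearMap.toSpanSingleton_apply]⟩
  obtain ⟨t, ht⟩ := Ideal.exists_pow_le_of_le_radical_of_fg hrad
    (IsNoetherian.noetherian _)
  refine ⟨t, fun r hr => ?_⟩
  have := ht hr
  rwa [LinearMap.mem_ker, LinearMap.toSpanSingleton_apply] at this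

end Aux

set_option maxHeartbeats 1600000 in
/-- The key theorem: for a flat local homomorphism `R → T` of Noetherian local rings such
that the maximal ideal of `T` is the extension of the maximal ideal of `R`, the base change
of the injective hull of the residue field of `R` is the injective hull of the residue
field of `T`. -/
theorem aux_key {R T : Type} [CommRing R] [CommRing T] [IsLocalRing R] [IsLocalRing T]
    [Algebra R T] [IsNoetherianRing R] [IsNoetherianRing T] [Module.Flat R T]
    [IsLocalHom (algebraMap R T)]
    (hmax : Ideal.map (algebraMap R T) (maximalIdeal R) = maximalIdeal T)
    {E : Type} [AddCommGroup E] [Module R E] (ι : ResidueField R →ₗ[R] E)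
    (hE : IsInjectiveHullOfResidueField R E ι)
    {ET : Type} [AddCommGroup ET] [Module T ET] (ιT : ResidueField T →ₗ[T] ET)
    (hET : IsInjectiveHullOfResidueField T ET ιT) :
    Nonempty ((T ⊗[R] E) ≃ₗ[T] ET) := by
  classical
  obtain ⟨hEinj, hιinj, hEess⟩ := hE
  obtain ⟨hETinj, hιTinj, hETess⟩ := hET
  letI : Module R ET := Module.compHom ET (algebraMap R T)
  haveI : IsScalarTower R T ET :=
    ⟨fun r t m => by
      show (r • t) • m = algebraMap R T r • (t • m)
      rw [Algebra.smul_def, mul_smul]⟩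
  -- generators of the maximal ideal of R
  obtain ⟨r, x, hx⟩ := Submodule.fg_iff_exists_fin_generating_family.mp
    (IsNoetherian.noetherian (maximalIdeal R))
  have hxmem : ∀ i, x i ∈ maximalIdeal R := fun i =>
    hx ▸ Submodule.subset_span ⟨i, rfl⟩
  -- the presentation of the maximal ideal
  set π : (Fin r → R) →ₗ[R] R := Fintype.linearCombination R x with hπdef
  have hπapp : ∀ a : Fin r → R, π a = ∑ i, a i * x i := by
    intro a
    rw [hπdef, Fintype.linearCombination_apply]
    simp [smul_eq_mul]
  have hπrange : LinearMap.range π = maximalIdeal R := by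
    rw [hπdef, Fintype.range_linearCombination, hx]
  obtain ⟨q, kk, hkk⟩ := Submodule.fg_iff_exists_fin_generating_family.mp
    (IsNoetherian.noetherian (LinearMap.ker π))
  have hkkmem : ∀ j, π (kk j) = 0 := by
    intro j
    have : kk j ∈ LinearMap.ker π := hkk ▸ Submodule.subset_span ⟨j, rfl⟩
    rwa [LinearMap.mem_ker] at this
  -- the two exact sequences over E
  set dE : E →ₗ[R] (Fin r → E) := LinearMap.pi (fun i => x i • LinearMap.id) with hdEdef
  have hdEapp : ∀ (e : E) (i : Fin r), dE e i = x i • e := fun e i => rfl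
  set gE : (Fin r → E) →ₗ[R] (Fin q → E) :=
    LinearMap.pi (fun j => ∑ i, kk j i • (LinearMap.proj i)) with hgEdef
  have hgEapp : ∀ (v : Fin r → E) (j : Fin q), gE v j = ∑ i, kk j i • v i := by
    intro v j
    rw [hgEdef]
    simp [LinearMap.pi_apply, LinearMap.sum_apply, LinearMap.smul_apply, LinearMap.proj_apply]
  -- first exact sequence: 0 → k → E → E^r
  have hexact1 : Function.Exact ι dE := by
    rw [LinearMap.exact_iff]
    apply le_antisymm
    · intro v hv
      have hvi : ∀ i, x i • v = 0 := by
        intro i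
        have := congr_fun (LinearMap.mem_ker.mp hv) i
        rwa [hdEapp] at this
      have hm : maximalIdeal R ≤ LinearMap.ker (LinearMap.toSpanSingleton R E v) := by
        rw [← hx, Submodule.span_le]
        rintro _ ⟨i, rfl⟩
        simp only [SetLike.mem_coe, LinearMap.mem_ker, LinearMap.toSpanSingleton_apply]
        exact hvi i
      exact aux_socle ι hEess v (fun y hy => by
        have := hm hy
        rwa [LinearMap.mem_ker, LinearMap.toSpanSingleton_apply] at this)
    · rintro _ ⟨c, rfl⟩
      rw [LinearMap.mem_ker]
      funext i
      rw [hdEapp, ← map_smul, aux_residue_smul _ (hxmem i), map_zero]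
      rfl
  -- second exact sequence: E → E^r → E^q, exact in the middle (uses injectivity of E)
  have hexact2 : Function.Exact dE gE := by
    rw [LinearMap.exact_iff]
    apply le_antisymm
    · intro v hv
      have hvj : ∀ j, ∑ i, kk j i • v i = 0 := by
        intro j
        have := congr_fun (LinearMap.mem_ker.mp hv) j
        rwa [hgEapp] at this
      set lam : (Fin r → R) →ₗ[R] E := Fintype.linearCombination R v with hlamdef
      have hlamapp : ∀ a : Fin r → R, lam a = ∑ i, a i • v i := by
        intro a
        rw [hlamdef, Fintype.linearCombination_apply]
      have hker : LinearMap.ker π ≤ LinearMap.ker lam := by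
        rw [← hkk, Submodule.span_le]
        rintro _ ⟨j, rfl⟩
        simp only [SetLike.mem_coe, LinearMap.mem_ker]
        rw [hlamapp]
        exact hvj j
      set φ : ↥(LinearMap.range π) →ₗ[R] E :=
        ((LinearMap.ker π).liftQ lam hker) ∘ₗ
          ((LinearMap.quotKerEquivRange π).symm : ↥(LinearMap.range π) →ₗ[R] _) with hφdef
      obtain ⟨Φ, hΦ⟩ := hEinj.out (LinearMap.range π).subtype
        (Submodule.injective_subtype _) φ
      refine ⟨Φ 1, ?_⟩
      funext i
      rw [hdEapp]
      have hxi : x i ∈ LinearMap.range π := by rw [hπrange]; exact hxmem i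
      have hπsingle : π (Pi.single i (1:R)) = x i := by
        rw [hπapp]
        simp [Pi.single_apply]
      have h1 : x i • Φ 1 = Φ (x i) := by rw [← map_smul, smul_eq_mul, mul_one]
      have h2 : Φ (x i) = φ ⟨x i, hxi⟩ := hΦ ⟨x i, hxi⟩
      have h3 : (LinearMap.quotKerEquivRange π) (Submodule.Quotient.mk (Pi.single i (1:R)))
          = ⟨x i, hxi⟩ := by
        apply Subtype.ext
        rw [LinearMap.quotKerEquivRange_apply_mk, hπsingle]
      have h4 : (LinearMap.quotKerEquivRange π).symm ⟨x i, hxi⟩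
          = Submodule.Quotient.mk (Pi.single i (1:R)) := by
        rw [← h3, LinearEquiv.symm_apply_apply]
      have h5 : φ ⟨x i, hxi⟩ = lam (Pi.single i (1:R)) := by
        rw [hφdef]
        simp only [LinearMap.coe_comp, Function.comp_apply, LinearEquiv.coe_coe]
        rw [h4, Submodule.liftQ_apply]
      rw [h1, h2, h5, hlamapp]
      simp [Pi.single_apply]
    · rintro _ ⟨e, rfl⟩
      rw [LinearMap.mem_ker]
      funext j
      rw [hgEapp]
      have : ∀ i, kk j i • dE e i = (kk j i * x i) • e := by
        intro i
        rw [hdEapp, ← mul_smul]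
      rw [Finset.sum_congr rfl (fun i _ => this i), ← Finset.sum_smul, ← hπapp, hkkmem,
        zero_smul]
      rfl
  -- the corresponding maps on T ⊗ E
  set dTE : (T ⊗[R] E) →ₗ[R] (Fin r → T ⊗[R] E) :=
    LinearMap.pi (fun i => x i • LinearMap.id) with hdTEdef
  have hdTEapp : ∀ (v : T ⊗[R] E) (i : Fin r), dTE v i = x i • v := fun v i => rfl
  set gTE : (Fin r → T ⊗[R] E) →ₗ[R] (Fin q → T ⊗[R] E) :=
    LinearMap.pi (fun j => ∑ i, kk j i • (LinearMap.proj i)) with hgTEdef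
  have hgTEapp : ∀ (v : Fin r → T ⊗[R] E) (j : Fin q), gTE v j = ∑ i, kk j i • v i := by
    intro v j
    rw [hgTEdef]
    simp [LinearMap.pi_apply, LinearMap.sum_apply, LinearMap.smul_apply, LinearMap.proj_apply]
  set ε1 : (T ⊗[R] (Fin r → E)) ≃ₗ[T] (Fin r → T ⊗[R] E) :=
    TensorProduct.piRight R T T (fun _ : Fin r => E) with hε1def
  set ε2 : (T ⊗[R] (Fin q → E)) ≃ₗ[T] (Fin q → T ⊗[R] E) :=
    TensorProduct.piRight R T T (fun _ : Fin q => E) with hε2def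
  have hcomm1 : ∀ w : T ⊗[R] E, ε1 (LinearMap.lTensor T dE w) = dTE w := by
    intro w
    induction w using TensorProduct.induction_on with
    | zero => simp
    | tmul t e =>
      rw [LinearMap.lTensor_tmul, hε1def, piRight_apply, piRightHom_tmul]
      funext i
      rw [hdTEapp, hdEapp, tmul_smul]
    | add w1 w2 h1 h2 => rw [map_add, map_add, h1, h2, map_add]
  have hcomm2 : ∀ w : T ⊗[R] (Fin r → E), ε2 (LinearMap.lTensor T gE w) = gTE (ε1 w) := by
    intro w
    induction w using TensorProduct.induction_on with
    | zero => simp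
    | tmul t f =>
      rw [LinearMap.lTensor_tmul, hε2def, piRight_apply, piRightHom_tmul,
        hε1def, piRight_apply, piRightHom_tmul]
      funext j
      rw [hgTEapp, hgEapp, tmul_sum]
      exact Finset.sum_congr rfl (fun i _ => by rw [tmul_smul])
    | add w1 w2 h1 h2 => rw [map_add, map_add, h1, h2, map_add, map_add]
  -- transferred exactness
  have hTexact1 : ∀ v : T ⊗[R] E, (∀ i, x i • v = 0) →
      ∃ w : T ⊗[R] (ResidueField R), LinearMap.lTensor T ι w = v := by
    intro v hv
    have h1 : ε1 (LinearMap.lTensor T dE v) = 0 := by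
      rw [hcomm1 v]
      funext i
      rw [hdTEapp]
      exact hv i
    have h0 : LinearMap.lTensor T dE v = 0 := (LinearEquiv.map_eq_zero_iff ε1).mp h1
    exact (Module.Flat.lTensor_exact T hexact1 v).mp h0
  have hTexact2 : ∀ v : Fin r → T ⊗[R] E, (∀ j, ∑ i, kk j i • v i = 0) →
      ∃ u : T ⊗[R] E, ∀ i, x i • u = v i := by
    intro v hv
    have h1 : ε2 (LinearMap.lTensor T gE (ε1.symm v)) = 0 := by
      rw [hcomm2, LinearEquiv.apply_symm_apply]
      funext j
      rw [hgTEapp]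
      exact hv j
    have h0 : LinearMap.lTensor T gE (ε1.symm v) = 0 := (LinearEquiv.map_eq_zero_iff ε2).mp h1
    obtain ⟨u, hu⟩ := (Module.Flat.lTensor_exact T hexact2 (ε1.symm v)).mp h0
    refine ⟨u, fun i => ?_⟩
    have h2 : ε1 (LinearMap.lTensor T dE u) = ε1 (ε1.symm v) := by rw [hu]
    rw [hcomm1, LinearEquiv.apply_symm_apply] at h2
    have := congr_fun h2 i
    rwa [hdTEapp] at this
  -- every element of T ⊗ k is a pure tensor s ⊗ 1
  have hpure : ∀ w : T ⊗[R] (ResidueField R), ∃ s : T, w = s ⊗ₜ[R] (1 : ResidueField R) := by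
    intro w
    induction w using TensorProduct.induction_on with
    | zero => exact ⟨0, by rw [TensorProduct.zero_tmul]⟩
    | tmul t c =>
      obtain ⟨a, rfl⟩ := Ideal.Quotient.mk_surjective c
      refine ⟨algebraMap R T a * t, ?_⟩
      have h1 : Ideal.Quotient.mk (maximalIdeal R) a = a • (1 : ResidueField R) := by
        have : a • (1 : ResidueField R) =
            Ideal.Quotient.mk (maximalIdeal R) (a * 1) := rfl
        rw [this, mul_one]
      rw [h1, tmul_smul, TensorProduct.smul_tmul', Algebra.smul_def]
    | add w1 w2 h1 h2 =>
      obtain ⟨s1, rfl⟩ := h1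
      obtain ⟨s2, rfl⟩ := h2
      exact ⟨s1 + s2, by rw [TensorProduct.add_tmul]⟩
  -- smul on the residue field of T
  have hresT : ∀ s : T, s • (1 : ResidueField T) = Ideal.Quotient.mk (maximalIdeal T) s := by
    intro s
    have h1 : s • (1 : ResidueField T) =
        s • (Ideal.Quotient.mk (maximalIdeal T) 1) := rfl
    have h2 : s • (Ideal.Quotient.mk (maximalIdeal T) 1) =
        Ideal.Quotient.mk (maximalIdeal T) (s * 1) := rfl
    rw [h1, h2, mul_one]
  -- the map f0 : k → ET
  set f0 : ResidueField R →ₗ[R] ET := {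
    toFun := fun c => ιT (ResidueField.map (algebraMap R T) c)
    map_add' := fun a b => by simp [map_add]
    map_smul' := fun a c => by
      obtain ⟨b, rfl⟩ := Ideal.Quotient.mk_surjective c
      simp only [RingHom.id_apply]
      have h1 : a • (Ideal.Quotient.mk (maximalIdeal R) b) =
          Ideal.Quotient.mk (maximalIdeal R) (a * b) := rfl
      have h2 : ResidueField.map (algebraMap R T)
            (Ideal.Quotient.mk (maximalIdeal R) (a * b)) =
          Ideal.Quotient.mk (maximalIdeal T) (algebraMap R T (a * b)) :=
        ResidueField.map_residue _ _
      have h3 : ResidueField.map (algebraMap R T)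
            (Ideal.Quotient.mk (maximalIdeal R) b) =
          Ideal.Quotient.mk (maximalIdeal T) (algebraMap R T b) :=
        ResidueField.map_residue _ _
      erw [h1, h2, h3]
      have h4 : a • ιT (Ideal.Quotient.mk (maximalIdeal T) (algebraMap R T b)) =
          algebraMap R T a • ιT (Ideal.Quotient.mk (maximalIdeal T) (algebraMap R T b)) := rfl
      erw [h4, ← map_smul]
      have h5 : algebraMap R T a • (Ideal.Quotient.mk (maximalIdeal T) (algebraMap R T b)) =
          Ideal.Quotient.mk (maximalIdeal T) (algebraMap R T a * algebraMap R T b) := rfl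
      erw [h5, ← map_mul] } with hf0def
  -- extension of ιT ∘ j along T ⊗ k → T ⊗ E
  have hbc_inj : Function.Injective (LinearMap.baseChange T ι) := by
    rw [LinearMap.baseChange_eq_ltensor]
    exact Module.Flat.lTensor_preserves_injective_linearMap ι hιinj
  obtain ⟨h, hh⟩ := hETinj.out (LinearMap.baseChange T ι) hbc_inj
    (LinearMap.liftBaseChange T f0)
  set g : E →ₗ[R] ET := {
    toFun := fun e => h ((1:T) ⊗ₜ[R] e)
    map_add' := fun a b => by
      show h ((1:T) ⊗ₜ[R] (a + b)) = h ((1:T) ⊗ₜ[R] a) + h ((1:T) ⊗ₜ[R] b)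
      rw [TensorProduct.tmul_add, map_add]
    map_smul' := fun a e => by
      show h ((1:T) ⊗ₜ[R] (a • e)) = a • h ((1:T) ⊗ₜ[R] e)
      rw [tmul_smul, ← algebraMap_smul T a ((1:T) ⊗ₜ[R] e), map_smul]
      rfl } with hgdef
  set G : (T ⊗[R] E) →ₗ[T] ET := LinearMap.liftBaseChange T g with hGdef
  have hGc : ∀ (s : T) (c : ResidueField R),
      G (s ⊗ₜ[R] ι c) = s • ιT (ResidueField.map (algebraMap R T) c) := by
    intro s c
    rw [hGdef, LinearMap.liftBaseChange_tmul]
    have h1 : g (ι c) = h ((1:T) ⊗ₜ[R] ι c) := rfl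
    have h2 : (1:T) ⊗ₜ[R] (ι c) = LinearMap.baseChange T ι ((1:T) ⊗ₜ[R] c) :=
      (LinearMap.baseChange_tmul _ _ _).symm
    rw [h1, h2, hh, LinearMap.liftBaseChange_tmul, one_smul]
    rfl
  -- the image of ιT is contained in the image of G
  have hrangeιT : LinearMap.range ιT ≤ LinearMap.range G := by
    rintro _ ⟨w, rfl⟩
    obtain ⟨s, rfl⟩ := Ideal.Quotient.mk_surjective w
    refine ⟨s • ((1:T) ⊗ₜ[R] ι 1), ?_⟩
    have h1 : G ((1:T) ⊗ₜ[R] ι 1) = ιT 1 := by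
      rw [hGc 1 1, map_one, one_smul]
    rw [map_smul, h1, ← map_smul, hresT]
  -- torsion of T ⊗ E
  have htorTE : ∀ v : T ⊗[R] E, ∃ t : ℕ, ∀ z ∈ (maximalIdeal T) ^ t, z • v = 0 := by
    intro v
    induction v using TensorProduct.induction_on with
    | zero => exact ⟨0, fun z _ => smul_zero z⟩
    | tmul s e =>
      obtain ⟨t, ht⟩ := aux_torsion ι hEess e
      refine ⟨t, fun z hz => ?_⟩
      have hzmem : z ∈ Ideal.map (algebraMap R T) ((maximalIdeal R) ^ t) := by
        rw [Ideal.map_pow, hmax]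
        exact hz
      have hker : Ideal.map (algebraMap R T) ((maximalIdeal R) ^ t) ≤
          LinearMap.ker (LinearMap.toSpanSingleton T (T ⊗[R] E) (s ⊗ₜ[R] e)) := by
        rw [Ideal.map_le_iff_le_comap]
        intro a ha
        simp only [Ideal.mem_comap, LinearMap.mem_ker, LinearMap.toSpanSingleton_apply]
        rw [algebraMap_smul, ← tmul_smul, ht a ha, TensorProduct.tmul_zero]
      have := hker hzmem
      rwa [LinearMap.mem_ker, LinearMap.toSpanSingleton_apply] at this
    | add v1 v2 h1 h2 =>
      obtain ⟨t1, ht1⟩ := h1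
      obtain ⟨t2, ht2⟩ := h2
      refine ⟨max t1 t2, fun z hz => ?_⟩
      rw [smul_add, ht1 z (Ideal.pow_le_pow_right (le_max_left t1 t2) hz),
        ht2 z (Ideal.pow_le_pow_right (le_max_right t1 t2) hz), add_zero]
  -- injectivity of G
  have hGinj : Function.Injective G := by
    apply LinearMap.ker_eq_bot.mp
    apply LinearMap.ker_eq_bot'.mpr
    intro v hv0
    by_contra hne
    obtain ⟨t0, ht0⟩ := htorTE v
    have hP : ∃ t : ℕ, ∀ z ∈ (maximalIdeal T) ^ t, z • v = 0 := ⟨t0, ht0⟩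
    have ht1pos : Nat.find hP ≠ 0 := by
      intro h0
      have := Nat.find_spec hP 1 (by
        rw [h0, pow_zero, Ideal.one_eq_top]
        trivial)
      rw [one_smul] at this
      exact hne this
    obtain ⟨s0, hs0⟩ := Nat.exists_eq_succ_of_ne_zero ht1pos
    have hnot : ¬ (∀ z ∈ (maximalIdeal T) ^ s0, z • v = 0) :=
      Nat.find_min hP (by rw [hs0]; exact Nat.lt_succ_self s0)
    push_neg at hnot
    obtain ⟨z', hz', hz'ne⟩ := hnot
    have hv1soc : ∀ z ∈ maximalIdeal T, z • (z' • v) = 0 := by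
      intro z hz
      rw [smul_smul]
      have : z * z' ∈ (maximalIdeal T) ^ (s0 + 1) := by
        rw [pow_succ, mul_comm z z']
        exact Ideal.mul_mem_mul hz' hz
      exact Nat.find_spec hP _ (by rwa [hs0])
    have hxkill : ∀ i, x i • (z' • v) = 0 := by
      intro i
      have hxi : algebraMap R T (x i) ∈ maximalIdeal T := by
        rw [← hmax]
        exact Ideal.mem_map_of_mem _ (hxmem i)
      have := hv1soc _ hxi
      rwa [algebraMap_smul T (x i) (z' • v)] at this
    obtain ⟨w, hw⟩ := hTexact1 (z' • v) hxkill
    obtain ⟨s2, rfl⟩ := hpure w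
    have hv1 : z' • v = s2 ⊗ₜ[R] ι 1 := by
      rw [← hw, LinearMap.lTensor_tmul]
    have hGv1 : G (z' • v) = ιT (Ideal.Quotient.mk (maximalIdeal T) s2) := by
      rw [hv1, hGc s2 1, map_one, ← map_smul, hresT]
    have hGv1' : G (z' • v) = 0 := by
      rw [map_smul, hv0, smul_zero]
    have hs2 : s2 ∈ maximalIdeal T := by
      rw [← Ideal.Quotient.eq_zero_iff_mem]
      apply hιTinj
      erw [map_zero, ← hGv1, hGv1']
    have hv1zero : z' • v = 0 := by
      rw [hv1]
      have hker : maximalIdeal T ≤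
          LinearMap.ker (LinearMap.toSpanSingleton T (T ⊗[R] E) ((1:T) ⊗ₜ[R] ι 1)) := by
        rw [← hmax, Ideal.map_le_iff_le_comap]
        intro a ha
        simp only [Ideal.mem_comap, LinearMap.mem_ker, LinearMap.toSpanSingleton_apply]
        rw [algebraMap_smul, ← tmul_smul, ← map_smul, aux_residue_smul a ha, map_zero,
          TensorProduct.tmul_zero]
      have := hker hs2
      rw [LinearMap.mem_ker, LinearMap.toSpanSingleton_apply] at this
      rw [← this, TensorProduct.smul_tmul', smul_eq_mul, mul_one]
    exact hz'ne hv1zero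
  -- surjectivity of G, by induction on the torsion degree
  have hsur : ∀ (t : ℕ) (u : ET), (∀ z ∈ (maximalIdeal T) ^ t, z • u = 0) →
      u ∈ LinearMap.range G := by
    intro t
    induction t with
    | zero =>
      intro u hu
      have h1 := hu 1 (by rw [pow_zero, Ideal.one_eq_top]; trivial)
      rw [one_smul] at h1
      rw [h1]
      exact Submodule.zero_mem _
    | succ s ih =>
      intro u hu
      have hmem : ∀ i : Fin r, ∃ v : T ⊗[R] E, G v = algebraMap R T (x i) • u := by
        intro i
        apply LinearMap.mem_range.mp
        apply ih
        intro z hz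
        rw [smul_smul]
        apply hu
        have hyT : algebraMap R T (x i) ∈ maximalIdeal T := by
          rw [← hmax]
          exact Ideal.mem_map_of_mem _ (hxmem i)
        rw [pow_succ]
        exact Ideal.mul_mem_mul hz hyT
      choose w hw using hmem
      have hGsmul : ∀ (a : R) (v : T ⊗[R] E), G (a • v) = a • G v := by
        intro a v
        rw [← algebraMap_smul T a v, map_smul, algebraMap_smul]
      have hrel : ∀ j, ∑ i, kk j i • w i = 0 := by
        intro j
        apply hGinj
        rw [map_sum, map_zero]
        have step : ∀ i, G (kk j i • w i) = algebraMap R T (kk j i * x i) • u := by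
          intro i
          rw [hGsmul, hw i, ← algebraMap_smul T (kk j i), smul_smul, ← map_mul]
        rw [Finset.sum_congr rfl (fun i _ => step i), ← Finset.sum_smul, ← map_sum,
          ← hπapp, hkkmem, map_zero, zero_smul]
      obtain ⟨u', hu'⟩ := hTexact2 w hrel
      have hK : maximalIdeal T ≤
          LinearMap.ker (LinearMap.toSpanSingleton T ET (G u' - u)) := by
        rw [← hmax, ← hx]
        have hspan : Submodule.span R (Set.range x) = Ideal.span (Set.range x) := rfl
        rw [hspan, Ideal.map_span, Ideal.span_le]
        rintro _ ⟨_, ⟨i, rfl⟩, rfl⟩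
        simp only [SetLike.mem_coe, LinearMap.mem_ker, LinearMap.toSpanSingleton_apply]
        rw [smul_sub]
        have h6 : algebraMap R T (x i) • G u' = algebraMap R T (x i) • u := by
          rw [← map_smul, algebraMap_smul, hu' i, hw i]
        rw [h6, sub_self]
      have hzero : ∀ z ∈ maximalIdeal T, z • (G u' - u) = 0 := by
        intro z hz
        have := hK hz
        rwa [LinearMap.mem_ker, LinearMap.toSpanSingleton_apply] at this
      have hsocmem := aux_socle ιT hETess _ hzero
      obtain ⟨v2, hv2⟩ := hrangeιT hsocmem
      exact ⟨u' - v2, by rw [map_sub, hv2]; abel⟩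
  have hGsurj : Function.Surjective G := by
    intro u
    obtain ⟨t, ht⟩ := aux_torsion ιT hETess u
    obtain ⟨v, hv⟩ := hsur t u ht
    exact ⟨v, hv⟩
  exact ⟨LinearEquiv.ofBijective G ⟨hGinj, hGsurj⟩⟩

theorem statement5 (R T : Type) [CommRing R] [CommRing T]
    [IsLocalRing R] [IsLocalRing T] [Algebra R T]
    (hRreg : IsRegularLocal R) (hTreg : IsRegularLocal T)
    (hRfield : ContainsField R) (hTfield : ContainsField T)
    [Module.Flat R T] (hloc : IsLocalHom (algebraMap R T))
    (hmax : Ideal.map (algebraMap R T) (maximalIdeal R) = maximalIdeal T)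
    (n : ℕ) (hdimR : ringKrullDim R = n) (hdimT : ringKrullDim T = n)
    (E : Type) [AddCommGroup E] [Module R E] (ι : ResidueField R →ₗ[R] E)
    (hE : IsInjectiveHullOfResidueField R E ι)
    (ET : Type) [AddCommGroup ET] [Module T ET] (ιT : ResidueField T →ₗ[T] ET)
    (hET : IsInjectiveHullOfResidueField T ET ιT) :
    Nonempty ((T ⊗[R] E) ≃ₗ[T] ET) := by
  haveI : IsNoetherianRing R := hRreg.1
  haveI : IsNoetherianRing T := hTreg.1
  haveI := hloc
  exact aux_key hmax ι hE ιT hET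
end
end
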